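/- Let z, z̃ ∈ ℂ with |z| = 1, Re(z) ≠ 0, Im(z) ≠ 0, z̃ = z + Δz, and let η ≤ |Re(z)·Im(z)|. Write q = Im(z)/Re(z) and q̃ = Im(z̃)/Re(z̃), and assume |Δz| < η. Then q̃ = q(1 + δq) with |δq| ≤ 2|Δz| / (η − |Δz|). -/

import Mathlib

/-- Let `z, z̃ ∈ ℂ` with `|z| = 1`, `Re z ≠ 0`, `Im z ≠ 0`, `z̃ = z + Δz`, and let
`η ≤ |Re(z)·Im(z)|` with `|Δz| < η`. Writing `q = Im z / Re z` and
`q̃ = Im z̃ / Re z̃`, we have `q̃ = q (1 + δq)` with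
`|δq| ≤ 2 |Δz| / (η − |Δz|)`. -/
theorem stmt_11 (z zt Δz : ℂ) (η : ℝ)
    (hz : ‖z‖ = 1) (hre : z.re ≠ 0) (him : z.im ≠ 0)
    (hzt : zt = z + Δz)
    (hη : η ≤ |z.re * z.im|)
    (hΔ : ‖Δz‖ < η) :
    ∃ δq : ℝ, zt.im / zt.re = (z.im / z.re) * (1 + δq) ∧
      |δq| ≤ 2 * ‖Δz‖ / (η - ‖Δz‖) := by
  set a := ‖Δz‖ with ha
  have hηpos : 0 < η := lt_of_le_of_lt (norm_nonneg Δz) hΔ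
  have hre1 : |z.re| ≤ 1 := hz ▸ Complex.abs_re_le_norm z
  have him1 : |z.im| ≤ 1 := hz ▸ Complex.abs_im_le_norm z
  have hdre : |Δz.re| ≤ a := Complex.abs_re_le_norm Δz
  have hdim : |Δz.im| ≤ a := Complex.abs_im_le_norm Δz
  have hanonneg : 0 ≤ a := norm_nonneg Δz
  have hre_ge : η ≤ |z.re| := by
    calc η ≤ |z.re * z.im| := hη
    _ = |z.re| * |z.im| := abs_mul _ _
    _ ≤ |z.re| * 1 := mul_le_mul_of_nonneg_left him1 (abs_nonneg _)
    _ = |z.re| := mul_one _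
  have him_ge : η ≤ |z.im| := by
    calc η ≤ |z.re * z.im| := hη
    _ = |z.re| * |z.im| := abs_mul _ _
    _ ≤ 1 * |z.im| := mul_le_mul_of_nonneg_right hre1 (abs_nonneg _)
    _ = |z.im| := one_mul _
  set δr := Δz.re / z.re with hδr
  set δp := Δz.im / z.im with hδp
  have hδr_bd : |δr| ≤ a / η := by
    rw [hδr, abs_div]
    exact div_le_div₀ hanonneg hdre hηpos hre_ge
  have h1δr : (η - a) / η ≤ 1 + δr := by
    have h1 : -(a / η) ≤ δr := neg_le_of_abs_le hδr_bd
    have h2 : (η - a) / η = 1 - a / η := by field_simp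
    linarith
  have h1δr_pos : 0 < 1 + δr := by
    have : 0 < (η - a) / η := div_pos (by linarith) hηpos
    linarith
  refine ⟨(δp - δr) / (1 + δr), ?_, ?_⟩
  · have hztre : zt.re = z.re * (1 + δr) := by
      rw [hzt]; simp only [Complex.add_re, hδr]; field_simp
    have hztim : zt.im = z.im * (1 + δp) := by
      rw [hzt]; simp only [Complex.add_im, hδp]; field_simp
    rw [hztre, hztim]
    field_simp
    ring
  · have key : |δp - δr| ≤ 2 * a / η := by
      have heq : δp - δr = (Δz.im * z.re - Δz.re * z.im) / (z.im * z.re) := by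
        rw [hδp, hδr]; field_simp
      rw [heq, abs_div]
      have hnum : |Δz.im * z.re - Δz.re * z.im| ≤ 2 * a := by
        calc |Δz.im * z.re - Δz.re * z.im| ≤ |Δz.im * z.re| + |Δz.re * z.im| :=
              abs_sub _ _
        _ = |Δz.im| * |z.re| + |Δz.re| * |z.im| := by rw [abs_mul, abs_mul]
        _ ≤ a * 1 + a * 1 :=
            add_le_add (mul_le_mul hdim hre1 (abs_nonneg _) hanonneg)
              (mul_le_mul hdre him1 (abs_nonneg _) hanonneg)
        _ = 2 * a := by ring
      have hden : η ≤ |z.im * z.re| := by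
        rw [abs_mul]; rw [abs_mul, mul_comm] at hη; exact hη
      exact div_le_div₀ (by positivity) hnum hηpos hden
    have habs : |(δp - δr) / (1 + δr)| = |δp - δr| / (1 + δr) := by
      rw [abs_div, abs_of_pos h1δr_pos]
    rw [habs]
    calc |δp - δr| / (1 + δr) ≤ (2 * a / η) / ((η - a) / η) :=
          div_le_div₀ (by positivity) key (div_pos (by linarith) hηpos) h1δr
    _ = 2 * a / (η - a) := by
          field_simp
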